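/- Let I = [c,d] ⊆ [-k,k] and let Ω_n(I) be the set of points (a_1/n,...,a_k/n) with integers 0 ≤ a_i < n/2 satisfying ∑_i cos(2πa_i/n) ∈ [c,d]. Then #Ω_n(I) = n^k·Vol(B_k(I)) + O_k(n^{k-1}), where B_k(I) = {x ∈ [0,1/2)^k : ∑_i cos(2πx_i) ∈ [c,d]}. -/

import Mathlib

open Real Finset MeasureTheory

/-- `B_k(I)` for `I = [c,d]`: points of the box `[0,1/2)^k` with
`∑ᵢ cos(2πxᵢ) ∈ [c,d]`. -/
def boxRegion (k : ℕ) (c d : ℝ) : Set (Fin k → ℝ) :=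
  {x | (∀ i, 0 ≤ x i ∧ x i < 1 / 2) ∧
    (∑ i, Real.cos (2 * Real.pi * x i)) ∈ Set.Icc c d}

noncomputable section LPC

/-- region with sum `≤ t` -/
def ALe (j : ℕ) (t : ℝ) : Set (Fin j → ℝ) :=
  {x | (∀ i, 0 ≤ x i ∧ x i < 1 / 2) ∧ ∑ i, Real.cos (2 * Real.pi * x i) ≤ t}

def ALt (j : ℕ) (t : ℝ) : Set (Fin j → ℝ) :=
  {x | (∀ i, 0 ≤ x i ∧ x i < 1 / 2) ∧ ∑ i, Real.cos (2 * Real.pi * x i) < t}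

def AEq (j : ℕ) (t : ℝ) : Set (Fin j → ℝ) :=
  {x | (∀ i, 0 ≤ x i ∧ x i < 1 / 2) ∧ ∑ i, Real.cos (2 * Real.pi * x i) = t}

lemma meas_sumcos (j : ℕ) : Measurable fun x : Fin j → ℝ => ∑ i, Real.cos (2 * Real.pi * x i) :=
  Finset.measurable_sum _ fun i _ => (Real.continuous_cos.comp (continuous_const.mul (continuous_apply i))).measurable

lemma meas_box (j : ℕ) : MeasurableSet {x : Fin j → ℝ | ∀ i, 0 ≤ x i ∧ x i < 1 / 2} := by
  have : {x : Fin j → ℝ | ∀ i, 0 ≤ x i ∧ x i < 1 / 2} = ⋂ i, (fun x : Fin j → ℝ => x i) ⁻¹' (Set.Ico 0 (1/2)) := by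
    ext x; simp [Set.mem_Ico, Set.mem_iInter]
  rw [this]
  exact MeasurableSet.iInter fun i => (measurable_pi_apply i) measurableSet_Ico

lemma meas_ALe (j : ℕ) (t : ℝ) : MeasurableSet (ALe j t) :=
  (meas_box j).inter ((meas_sumcos j) measurableSet_Iic)

lemma meas_ALt (j : ℕ) (t : ℝ) : MeasurableSet (ALt j t) :=
  (meas_box j).inter ((meas_sumcos j) measurableSet_Iio)

lemma meas_AEq (j : ℕ) (t : ℝ) : MeasurableSet (AEq j t) :=
  (meas_box j).inter ((meas_sumcos j) (measurableSet_singleton t))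

lemma mySlice (j : ℕ) (S : Set (Fin (j+1) → ℝ)) (hS : MeasurableSet S) :
    volume S = ∫⁻ b : ℝ, volume {y : Fin j → ℝ | Fin.cons b y ∈ S} := by
  have hmp := measurePreserving_piFinSuccAbove (fun _ : Fin (j+1) => (volume : Measure ℝ)) 0
  set e := MeasurableEquiv.piFinSuccAbove (fun _ : Fin (j+1) => ℝ) 0
  have h1 : volume S = ((volume : Measure ℝ).prod (Measure.pi fun _ : Fin j => volume)) (e.symm ⁻¹' S) := by
    rw [← hmp.map_eq, MeasurableEquiv.map_apply]
    congr 1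
    ext x
    simp [e, MeasurableEquiv.piFinSuccAbove]
  rw [h1, Measure.prod_apply (e.symm.measurable hS)]
  congr 1
  ext b
  congr 1
  ext y
  simp [e, MeasurableEquiv.piFinSuccAbove, Fin.insertNthEquiv, Fin.insertNth_zero']

lemma cons_mem_ALe {j : ℕ} (t b : ℝ) (y : Fin j → ℝ) :
    Fin.cons b y ∈ ALe (j+1) t ↔ ((0 ≤ b ∧ b < 1/2) ∧ y ∈ ALe j (t - Real.cos (2*Real.pi*b))) := by
  simp only [ALe, Set.mem_setOf_eq, Fin.forall_fin_succ, Fin.cons_zero, Fin.cons_succ,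
    Fin.sum_univ_succ]
  constructor
  · rintro ⟨⟨h0, hs⟩, hsum⟩
    exact ⟨h0, hs, by linarith⟩
  · rintro ⟨h0, hs, hsum⟩
    exact ⟨⟨h0, hs⟩, by linarith⟩

lemma cons_mem_AEq {j : ℕ} (t b : ℝ) (y : Fin j → ℝ) :
    Fin.cons b y ∈ AEq (j+1) t ↔ ((0 ≤ b ∧ b < 1/2) ∧ y ∈ AEq j (t - Real.cos (2*Real.pi*b))) := by
  simp only [AEq, Set.mem_setOf_eq, Fin.forall_fin_succ, Fin.cons_zero, Fin.cons_succ,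
    Fin.sum_univ_succ]
  constructor
  · rintro ⟨⟨h0, hs⟩, hsum⟩
    exact ⟨h0, hs, by linarith⟩
  · rintro ⟨h0, hs, hsum⟩
    exact ⟨⟨h0, hs⟩, by linarith⟩

/-- injectivity of `cos (2πx)` on `[0,1/2)` -/
lemma cos_injOn : Set.InjOn (fun b : ℝ => Real.cos (2*Real.pi*b)) (Set.Ico 0 (1/2)) := by
  intro x hx y hy h
  have hinj := Real.injOn_cos
  have hx2 : 2*Real.pi*x ∈ Set.Icc 0 Real.pi := by
    constructor
    · have := Real.pi_pos; nlinarith [hx.1]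
    · nlinarith [Real.pi_pos, hx.2]
  have hy2 : 2*Real.pi*y ∈ Set.Icc 0 Real.pi := by
    constructor
    · have := Real.pi_pos; nlinarith [hy.1]
    · nlinarith [Real.pi_pos, hy.2]
  have := hinj hx2 hy2 h
  have hpi := Real.pi_pos
  nlinarith [this]

/-- level sets are null -/
lemma vol_AEq (j : ℕ) (t : ℝ) : volume (AEq (j+1) t) = 0 := by
  induction j generalizing t with
  | zero =>
    rw [mySlice 0 _ (meas_AEq 1 t)]
    have hset : ∀ b : ℝ, {y : Fin 0 → ℝ | Fin.cons b y ∈ AEq 1 t}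
        = if (0 ≤ b ∧ b < 1/2) ∧ Real.cos (2*Real.pi*b) = t then Set.univ else ∅ := by
      intro b
      split_ifs with h
      · ext y
        simp only [Set.mem_setOf_eq, Set.mem_univ, iff_true, cons_mem_AEq]
        refine ⟨h.1, ?_⟩
        simp only [AEq, Set.mem_setOf_eq]
        refine ⟨fun i => i.elim0, ?_⟩
        have : (∑ i : Fin 0, Real.cos (2*Real.pi*y i)) = 0 := by simp
        rw [this]
        linarith [h.2]
      · ext y
        simp only [Set.mem_setOf_eq, Set.mem_empty_iff_false, iff_false, cons_mem_AEq]
        rintro ⟨hb, hy⟩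
        apply h
        refine ⟨hb, ?_⟩
        simp only [AEq, Set.mem_setOf_eq] at hy
        have : (∑ i : Fin 0, Real.cos (2*Real.pi*y i)) = 0 := by simp
        rw [this] at hy
        linarith [hy.2]
    set N : Set ℝ := {b | (0 ≤ b ∧ b < 1/2) ∧ Real.cos (2*Real.pi*b) = t} with hNdef
    have hN : N.Subsingleton := by
      intro b1 h1 b2 h2
      exact cos_injOn ⟨h1.1.1, h1.1.2⟩ ⟨h2.1.1, h2.1.2⟩ (h1.2.trans h2.2.symm)
    have hN0 : volume N = 0 := hN.measure_zero volume
    have hae : ∀ᵐ b : ℝ, b ∉ N := measure_eq_zero_iff_ae_notMem.mp hN0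
    have : ∫⁻ b : ℝ, volume {y : Fin 0 → ℝ | Fin.cons b y ∈ AEq 1 t} = ∫⁻ _ : ℝ, 0 := by
      apply lintegral_congr_ae
      filter_upwards [hae] with b hb
      rw [hset b, if_neg (by exact hb)]
      simp
    rw [this, lintegral_zero]
  | succ j ih =>
    rw [mySlice (j+1) _ (meas_AEq (j+2) t)]
    have : ∀ b : ℝ, volume {y : Fin (j+1) → ℝ | Fin.cons b y ∈ AEq (j+2) t} = 0 := by
      intro b
      by_cases hb : (0 ≤ b ∧ b < 1/2)
      · have : {y : Fin (j+1) → ℝ | Fin.cons b y ∈ AEq (j+2) t}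
            = AEq (j+1) (t - Real.cos (2*Real.pi*b)) := by
          ext y; rw [Set.mem_setOf_eq, cons_mem_AEq]; tauto
        rw [this]; exact ih _
      · have : {y : Fin (j+1) → ℝ | Fin.cons b y ∈ AEq (j+2) t} = ∅ := by
          ext y; rw [Set.mem_setOf_eq, cons_mem_AEq]; tauto
        simp [this]
    simp [this]




lemma vol_ALe_le_one (j : ℕ) (t : ℝ) : volume (ALe j t) ≤ 1 := by
  have h1 : ALe j t ⊆ Set.univ.pi fun _ : Fin j => Set.Ico (0:ℝ) (1/2) := by
    intro x hx
    simp only [Set.mem_pi, Set.mem_univ, Set.mem_Ico, forall_const]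
    exact fun i => hx.1 i
  calc volume (ALe j t) ≤ volume (Set.univ.pi fun _ : Fin j => Set.Ico (0:ℝ) (1/2)) :=
        measure_mono h1
    _ = ∏ _i : Fin j, volume (Set.Ico (0:ℝ) (1/2)) := by rw [volume_pi_pi]
    _ ≤ 1 := by
        refine Finset.prod_le_one (fun i _ => zero_le) (fun i _ => ?_)
        rw [Real.volume_Ico]
        exact ENNReal.ofReal_le_one.mpr (by norm_num)

lemma vol_ALe_ne_top (j : ℕ) (t : ℝ) : volume (ALe j t) ≠ ⊤ :=
  ne_top_of_le_ne_top ENNReal.one_ne_top (vol_ALe_le_one j t)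

lemma ALe_mono (j : ℕ) {s t : ℝ} (h : s ≤ t) : ALe j s ⊆ ALe j t :=
  fun x hx => ⟨hx.1, hx.2.trans h⟩

/-- Φ -/
def Phi (j : ℕ) (t : ℝ) : ℝ := (volume (ALe j t)).toReal

lemma Phi_nonneg (j : ℕ) (t : ℝ) : 0 ≤ Phi j t := ENNReal.toReal_nonneg

lemma Phi_le_one (j : ℕ) (t : ℝ) : Phi j t ≤ 1 := by
  have := vol_ALe_le_one j t
  simpa [Phi] using ENNReal.toReal_mono (by simp) this

lemma Phi_mono (j : ℕ) : Monotone (Phi j) := fun s t h =>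
  ENNReal.toReal_mono (vol_ALe_ne_top j t) (measure_mono (ALe_mono j h))

lemma Phi_measurable (j : ℕ) : Measurable (Phi j) := (Phi_mono j).measurable


lemma arccos_antitone : Antitone Real.arccos := fun x y h => by
  simp only [Real.arccos_eq_pi_div_two_sub_arcsin]
  linarith [Real.monotone_arcsin h]

lemma cos_le_iff_arccos {x t : ℝ} (hx0 : 0 ≤ x) (hx : x < 1/2) :
    Real.cos (2*Real.pi*x) ≤ t ↔ Real.arccos t ≤ 2*Real.pi*x := by
  have hpi := Real.pi_pos
  have h0 : 0 ≤ 2*Real.pi*x := by nlinarith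
  have h1 : 2*Real.pi*x < Real.pi := by nlinarith
  constructor
  · intro h
    calc Real.arccos t ≤ Real.arccos (Real.cos (2*Real.pi*x)) := arccos_antitone h
      _ = 2*Real.pi*x := Real.arccos_cos h0 h1.le
  · intro h
    rcases le_or_gt (-1) t with hm | hm
    · rcases le_or_gt t 1 with h1' | h1'
      · calc Real.cos (2*Real.pi*x) ≤ Real.cos (Real.arccos t) :=
            Real.cos_le_cos_of_nonneg_of_le_pi (Real.arccos_nonneg t) h1.le h
          _ = t := Real.cos_arccos hm h1'
      · exact (Real.cos_le_one _).trans h1'.le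
    · exfalso
      rw [Real.arccos_of_le_neg_one hm.le] at h
      linarith


section
lemma vol_ALe_succ (j : ℕ) (t : ℝ) :
    volume (ALe (j+1) t)
      = ∫⁻ b in Set.Ico (0:ℝ) (1/2), volume (ALe j (t - Real.cos (2*Real.pi*b))) := by
  rw [mySlice _ _ (meas_ALe (j+1) t), ← lintegral_indicator measurableSet_Ico]
  congr 1
  funext b
  by_cases hb : b ∈ Set.Ico (0:ℝ) (1/2)
  · rw [Set.indicator_of_mem hb]
    congr 1
    ext y
    rw [Set.mem_setOf_eq, cons_mem_ALe]
    simp only [Set.mem_Ico] at hb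
    tauto
  · rw [Set.indicator_of_notMem hb]
    have : {y : Fin j → ℝ | Fin.cons b y ∈ ALe (j+1) t} = ∅ := by
      ext y
      rw [Set.mem_setOf_eq, cons_mem_ALe]
      simp only [Set.mem_Ico] at hb
      tauto
    simp [this]

lemma vol_ALe_zero (s : ℝ) : volume (ALe 0 s) = if 0 ≤ s then 1 else 0 := by
  split_ifs with h
  · have : ALe 0 s = Set.univ := by
      ext x
      simp only [ALe, Set.mem_setOf_eq, Set.mem_univ, iff_true]
      exact ⟨fun i => i.elim0, by simpa using h⟩
    rw [this, volume_pi, Measure.pi_univ]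
    simp
  · have : ALe 0 s = ∅ := by
      ext x
      simp only [ALe, Set.mem_setOf_eq, Set.mem_empty_iff_false, iff_false, not_and]
      intro _
      simpa using h
    simp [this]

lemma Phi_one (t : ℝ) : Phi 1 t = 1/2 - Real.arccos t / (2*Real.pi) := by
  have hpi := Real.pi_pos
  set α := Real.arccos t / (2*Real.pi) with hα
  have hα0 : 0 ≤ α := div_nonneg (Real.arccos_nonneg t) (by positivity)
  have hα2 : α ≤ 1/2 := by
    rw [hα, div_le_iff₀ (by positivity)]
    calc Real.arccos t ≤ Real.pi := Real.arccos_le_pi t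
      _ = 1/2 * (2*Real.pi) := by ring
  have key : volume (ALe 1 t) = volume (Set.Ico α (1/2)) := by
    rw [vol_ALe_succ 0 t, ← lintegral_indicator measurableSet_Ico]
    have : (Set.Ico (0:ℝ) (1/2)).indicator (fun b => volume (ALe 0 (t - Real.cos (2*Real.pi*b))))
        = (Set.Ico α (1/2)).indicator (fun _ => 1) := by
      funext b
      by_cases hb : b ∈ Set.Ico (0:ℝ) (1/2)
      · rw [Set.indicator_of_mem hb, vol_ALe_zero]
        have hiff : 0 ≤ t - Real.cos (2*Real.pi*b) ↔ α ≤ b := by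
          rw [sub_nonneg, cos_le_iff_arccos hb.1 hb.2, hα, div_le_iff₀ (by positivity)]
          constructor <;> intro h <;> nlinarith
        by_cases hc : α ≤ b
        · rw [if_pos (hiff.mpr hc), Set.indicator_of_mem (Set.mem_Ico.mpr ⟨hc, hb.2⟩)]
        · rw [if_neg (fun h => hc (hiff.mp h)), Set.indicator_of_notMem (fun h => hc h.1)]
      · rw [Set.indicator_of_notMem hb, Set.indicator_of_notMem]
        intro h
        exact hb ⟨hα0.trans h.1, h.2⟩
    rw [this, lintegral_indicator measurableSet_Ico, setLIntegral_one]
  rw [Phi, key, Real.volume_Ico, ENNReal.toReal_ofReal (by linarith)]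

lemma Phi_succ (j : ℕ) (t : ℝ) :
    Phi (j+1) t = ∫ b in Set.Ico (0:ℝ) (1/2), Phi j (t - Real.cos (2*Real.pi*b)) := by
  have hmeas : Measurable fun b : ℝ => Phi j (t - Real.cos (2*Real.pi*b)) :=
    (Phi_measurable j).comp ((continuous_const.sub (Real.continuous_cos.comp
      (continuous_const.mul continuous_id))).measurable)
  have h2 : ∫ b in Set.Ico (0:ℝ) (1/2), Phi j (t - Real.cos (2*Real.pi*b))
      = (∫⁻ b in Set.Ico (0:ℝ) (1/2),
          ENNReal.ofReal (Phi j (t - Real.cos (2*Real.pi*b)))).toReal :=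
    MeasureTheory.integral_eq_lintegral_of_nonneg_ae
      (Filter.Eventually.of_forall fun b => ENNReal.toReal_nonneg)
      hmeas.aestronglyMeasurable
  have h3 : ∀ b : ℝ, ENNReal.ofReal (Phi j (t - Real.cos (2*Real.pi*b)))
      = volume (ALe j (t - Real.cos (2*Real.pi*b))) := fun b =>
    ENNReal.ofReal_toReal (vol_ALe_ne_top _ _)
  rw [h2, lintegral_congr h3, Phi, vol_ALe_succ]
end


section


lemma riemann (j n : ℕ) (hn : Odd n) (hn1 : 1 < n) (t : ℝ) :
    |(∑ b ∈ Finset.range ((n+1)/2), Phi j (t - Real.cos (2*Real.pi*(b:ℝ)/(n:ℝ))))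
      - (n:ℝ) * Phi (j+1) t| ≤ 1 := by
  have hpi := Real.pi_pos
  have hn0 : (0:ℝ) < n := by positivity
  set m := (n+1)/2 with hm
  set K := m - 1 with hKdef
  have hm1 : 1 ≤ m := by omega
  have hmK : m = K + 1 := by omega
  have h2K : 2*K + 1 = n := by
    rcases hn with ⟨r, hr⟩; omega
  have hKr : (K:ℝ) = ((n:ℝ)-1)/2 := by
    have : ((2*K + 1 : ℕ) : ℝ) = (n:ℝ) := by rw [h2K]
    push_cast at this
    linarith
  have hKle : (K:ℝ) ≤ (n:ℝ)/2 := by rw [hKr]; linarith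
  set h : ℝ → ℝ := fun u => Phi j (t - Real.cos (2*Real.pi*u/(n:ℝ))) with hh
  have hmono : MonotoneOn h (Set.Icc 0 ((n:ℝ)/2)) := by
    intro u1 h1 u2 h2 h12
    apply Phi_mono
    have hc : Real.cos (2*Real.pi*u2/(n:ℝ)) ≤ Real.cos (2*Real.pi*u1/(n:ℝ)) := by
      apply Real.cos_le_cos_of_nonneg_of_le_pi
      · have := h1.1; positivity
      · rw [div_le_iff₀ hn0]
        have := h2.2
        nlinarith
      · have h12' : u1 ≤ u2 := h12
        gcongr
    linarith
  have h0 : ∀ u, 0 ≤ h u := fun u => Phi_nonneg _ _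
  have h1b : ∀ u, h u ≤ 1 := fun u => Phi_le_one _ _
  -- integral formula
  have hint : (n:ℝ) * Phi (j+1) t = ∫ u in (0:ℝ)..((n:ℝ)/2), h u := by
    have e0 : ∫ b in Set.Ico (0:ℝ) (1/2), Phi j (t - Real.cos (2*Real.pi*b))
        = ∫ b in Set.Ioc (0:ℝ) (1/2), Phi j (t - Real.cos (2*Real.pi*b)) :=
      MeasureTheory.setIntegral_congr_set MeasureTheory.Ico_ae_eq_Ioc
    have e1 : Phi (j+1) t = ∫ x in (0:ℝ)..(1/2), Phi j (t - Real.cos (2*Real.pi*x)) := by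
      rw [Phi_succ, e0, ← intervalIntegral.integral_of_le (by norm_num : (0:ℝ) ≤ 1/2)]
    have hcomp := intervalIntegral.integral_comp_div
      (a := (0:ℝ)) (b := (n:ℝ)/2) (c := (n:ℝ))
      (f := fun x => Phi j (t - Real.cos (2*Real.pi*x))) (ne_of_gt hn0)
    have hdd : ((n:ℝ)/2)/(n:ℝ) = 1/2 := by field_simp
    have e2 : ∫ u in (0:ℝ)..((n:ℝ)/2), h u
        = (n:ℝ) • ∫ x in (0:ℝ)..(1/2), Phi j (t - Real.cos (2*Real.pi*x)) := by
      calc ∫ u in (0:ℝ)..((n:ℝ)/2), h u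
          = ∫ u in (0:ℝ)..((n:ℝ)/2), Phi j (t - Real.cos (2*Real.pi*(u/(n:ℝ)))) := by
            apply intervalIntegral.integral_congr
            intro u _
            rw [hh]; ring_nf
        _ = (n:ℝ) • ∫ x in ((0:ℝ)/(n:ℝ))..(((n:ℝ)/2)/(n:ℝ)), Phi j (t - Real.cos (2*Real.pi*x)) := hcomp
        _ = (n:ℝ) • ∫ x in (0:ℝ)..(1/2), Phi j (t - Real.cos (2*Real.pi*x)) := by
            rw [zero_div, hdd]
    rw [e1, e2, smul_eq_mul]
  -- integrability
  have hIntOn : IntegrableOn h (Set.Icc (0:ℝ) ((n:ℝ)/2)) volume :=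
    hmono.integrableOn_isCompact isCompact_Icc
  have hII1 : IntervalIntegrable h volume 0 (K:ℝ) := by
    apply (hIntOn.mono_set ?_).intervalIntegrable
    rw [Set.uIcc_of_le (by positivity)]
    exact Set.Icc_subset_Icc le_rfl hKle
  have hII2 : IntervalIntegrable h volume (K:ℝ) ((n:ℝ)/2) := by
    apply (hIntOn.mono_set ?_).intervalIntegrable
    rw [Set.uIcc_of_le hKle]
    exact Set.Icc_subset_Icc (by positivity) le_rfl
  have hsplit : ∫ u in (0:ℝ)..((n:ℝ)/2), h u
      = (∫ u in (0:ℝ)..(K:ℝ), h u) + ∫ u in (K:ℝ)..((n:ℝ)/2), h u :=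
    (intervalIntegral.integral_add_adjacent_intervals hII1 hII2).symm
  -- upper bound for sum
  have hmono0K : MonotoneOn h (Set.Icc 0 (0 + (K:ℕ) : ℝ)) := by
    apply hmono.mono
    apply Set.Icc_subset_Icc le_rfl
    simpa using hKle
  have hsum_le : (∑ b ∈ Finset.range m, h (b:ℝ)) ≤ (n:ℝ) * Phi (j+1) t + 1 := by
    have hs : ∑ b ∈ Finset.range m, h (b:ℝ)
        = (∑ b ∈ Finset.range K, h (b:ℝ)) + h (K:ℝ) := by
      rw [hmK, Finset.sum_range_succ]
    have h1 : (∑ i ∈ Finset.range K, h ((0:ℝ) + (i:ℕ))) ≤ ∫ u in (0:ℝ)..((0:ℝ)+(K:ℕ)), h u :=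
      hmono0K.sum_le_integral
    simp only [zero_add] at h1
    have h2 : ∫ u in (0:ℝ)..(K:ℝ), h u ≤ ∫ u in (0:ℝ)..((n:ℝ)/2), h u := by
      rw [hsplit]
      have : 0 ≤ ∫ u in (K:ℝ)..((n:ℝ)/2), h u :=
        intervalIntegral.integral_nonneg hKle (fun u _ => h0 u)
      linarith
    rw [hint, hs]
    have := h1b (K:ℝ)
    linarith
  -- lower bound for sum
  have hint_le : (n:ℝ) * Phi (j+1) t ≤ (∑ b ∈ Finset.range m, h (b:ℝ)) + 1 := by
    have h1 : ∫ u in (0:ℝ)..((0:ℝ)+(K:ℕ)), h u ≤ ∑ i ∈ Finset.range K, h ((0:ℝ) + ((i:ℕ)+1:ℕ)) :=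
      hmono0K.integral_le_sum
    simp only [zero_add] at h1
    have hre : ∑ i ∈ Finset.range K, h (((i:ℕ)+1:ℕ) : ℝ) = (∑ b ∈ Finset.range m, h (b:ℝ)) - h 0 := by
      rw [hmK, Finset.sum_range_succ' (fun b => h (b:ℝ))]
      push_cast
      ring
    have h2 : ∫ u in (K:ℝ)..((n:ℝ)/2), h u ≤ 1/2 := by
      have hconst : ∫ u in (K:ℝ)..((n:ℝ)/2), (1:ℝ) = 1/2 := by
        rw [intervalIntegral.integral_const, smul_eq_mul, mul_one, hKr]
        ring
      rw [← hconst]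
      apply intervalIntegral.integral_mono_on hKle hII2 intervalIntegrable_const
      intro x _
      exact h1b x
    rw [hint, hsplit]
    push_cast at h1 hre
    rw [hre] at h1
    have := h0 0
    linarith
  rw [abs_le]
  constructor
  · have : ∀ b:ℕ, Phi j (t - Real.cos (2*Real.pi*(b:ℝ)/(n:ℝ))) = h (b:ℝ) := fun b => rfl
    simp only [this]
    linarith
  · have : ∀ b:ℕ, Phi j (t - Real.cos (2*Real.pi*(b:ℝ)/(n:ℝ))) = h (b:ℝ) := fun b => rfl
    simp only [this]
    linarith
end




open scoped Classical in
noncomputable def cnt (j n : ℕ) (Q : ℝ → Prop) : ℕ :=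
  ((Fintype.piFinset fun _ : Fin j => Finset.range n).filter
    (fun a => (∀ i, 2 * a i < n) ∧ Q (∑ i, Real.cos (2*Real.pi*(a i : ℝ)/(n:ℝ))))).card

lemma cnt_congr (j n : ℕ) (Q Q' : ℝ → Prop) (h : ∀ s, Q s ↔ Q' s) :
    cnt j n Q = cnt j n Q' := by
  classical
  unfold cnt
  congr 1
  apply Finset.filter_congr
  intro a _
  rw [h]

open scoped Classical in
lemma cnt_zero (n : ℕ) (Q : ℝ → Prop) : cnt 0 n Q = if Q 0 then 1 else 0 := by
  classical
  unfold cnt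
  have hpi : (Fintype.piFinset fun _ : Fin 0 => Finset.range n) = {finZeroElim} := by
    ext f
    simp only [Fintype.mem_piFinset, Finset.mem_singleton]
    constructor
    · intro _; exact Subsingleton.elim _ _
    · intro _ i; exact i.elim0
  rw [hpi, Finset.filter_singleton]
  have hsum : (∑ i : Fin 0, Real.cos (2*Real.pi*((finZeroElim : Fin 0 → ℕ) i : ℝ)/(n:ℝ))) = 0 := by
    simp
  by_cases h : Q 0
  · have hc : (∀ i : Fin 0, 2 * (finZeroElim : Fin 0 → ℕ) i < n)
        ∧ Q (∑ i : Fin 0, Real.cos (2*Real.pi*((finZeroElim : Fin 0 → ℕ) i : ℝ)/(n:ℝ))) :=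
      ⟨fun i => i.elim0, by rw [hsum]; exact h⟩
    rw [if_pos hc, if_pos h, Finset.card_singleton]
  · have hc : ¬((∀ i : Fin 0, 2 * (finZeroElim : Fin 0 → ℕ) i < n)
        ∧ Q (∑ i : Fin 0, Real.cos (2*Real.pi*((finZeroElim : Fin 0 → ℕ) i : ℝ)/(n:ℝ)))) := by
      rintro ⟨-, hq⟩
      rw [hsum] at hq
      exact h hq
    rw [if_neg hc, if_neg h, Finset.card_empty]

lemma cnt_succ (j n : ℕ) (Q : ℝ → Prop) :
    cnt (j+1) n Q
      = ∑ b ∈ Finset.range ((n+1)/2),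
          cnt j n (fun s => Q (Real.cos (2*Real.pi*(b:ℝ)/(n:ℝ)) + s)) := by
  classical
  unfold cnt
  refine Eq.trans (Finset.card_eq_sum_card_fiberwise
    (f := fun a : Fin (j+1) → ℕ => a 0) (t := Finset.range ((n+1)/2)) ?_) ?_
  · intro a ha
    rw [Finset.mem_coe, Finset.mem_filter] at ha
    rw [Finset.mem_coe, Finset.mem_range]
    have := ha.2.1 0
    show a 0 < (n+1)/2
    omega
  apply Finset.sum_congr rfl
  intro b hb
  rw [Finset.mem_range] at hb
  refine Finset.card_bij' (fun a _ => Fin.tail a) (fun y _ => Fin.cons b y) ?_ ?_ ?_ ?_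
  · -- hi : maps into
    intro a ha
    simp only [Finset.mem_filter, Fintype.mem_piFinset, Finset.mem_range] at ha ⊢
    obtain ⟨⟨hmem, hP, hQ⟩, hab⟩ := ha
    refine ⟨fun i => hmem i.succ, fun i => hP i.succ, ?_⟩
    have hsum : (∑ i : Fin (j+1), Real.cos (2*Real.pi*(a i : ℝ)/(n:ℝ)))
        = Real.cos (2*Real.pi*(a 0 : ℝ)/(n:ℝ))
          + ∑ i : Fin j, Real.cos (2*Real.pi*(Fin.tail a i : ℝ)/(n:ℝ)) := by
      rw [Fin.sum_univ_succ]
      rfl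
    rw [hsum, hab] at hQ
    exact hQ
  · -- hj : maps back
    intro y hy
    simp only [Finset.mem_filter, Fintype.mem_piFinset, Finset.mem_range] at hy ⊢
    obtain ⟨hmem, hP, hQ⟩ := hy
    refine ⟨⟨?_, ?_, ?_⟩, ?_⟩
    · intro i
      refine Fin.cases ?_ ?_ i
      · rw [Fin.cons_zero]; omega
      · intro i'; rw [Fin.cons_succ]; exact hmem i'
    · intro i
      refine Fin.cases ?_ ?_ i
      · rw [Fin.cons_zero]; omega
      · intro i'; rw [Fin.cons_succ]; exact hP i'
    · have hsum : (∑ i : Fin (j+1), Real.cos (2*Real.pi*((Fin.cons b y : Fin (j+1) → ℕ) i : ℝ)/(n:ℝ)))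
          = Real.cos (2*Real.pi*(b : ℝ)/(n:ℝ))
            + ∑ i : Fin j, Real.cos (2*Real.pi*(y i : ℝ)/(n:ℝ)) := by
        rw [Fin.sum_univ_succ]
        simp [Fin.cons_zero, Fin.cons_succ]
      rw [hsum]
      exact hQ
    · simp
  · -- left inverse
    intro a ha
    simp only [Finset.mem_filter] at ha
    show Fin.cons b (Fin.tail a) = a
    have hb2 : b = a 0 := ha.2.symm
    subst hb2
    exact Fin.cons_self_tail a
  · -- right inverse
    intro y hy
    simp


section


open scoped Classical in
lemma cnt_one_filter (n : ℕ) (Q : ℝ → Prop) :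
    cnt 1 n Q = ((Finset.range ((n+1)/2)).filter
      (fun b : ℕ => Q (Real.cos (2*Real.pi*(b:ℝ)/(n:ℝ))))).card := by
  rw [show cnt 1 n Q = cnt (0+1) n Q from rfl, cnt_succ, Finset.card_filter]
  apply Finset.sum_congr rfl
  intro b _
  rw [cnt_zero, add_zero]

lemma bn_mem {n b : ℕ} (hn1 : 1 < n) (hb : b < (n+1)/2) (hodd : Odd n) :
    0 ≤ (b:ℝ)/(n:ℝ) ∧ (b:ℝ)/(n:ℝ) < 1/2 := by
  have hn0 : (0:ℝ) < n := by positivity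
  constructor
  · positivity
  · rw [div_lt_iff₀ hn0]
    have h2b : 2*b < n := by
      rcases hodd with ⟨r, hr⟩; omega
    have : ((2*b:ℕ):ℝ) < (n:ℝ) := by exact_mod_cast h2b
    push_cast at this
    linarith

lemma base_le (n : ℕ) (hn : Odd n) (hn1 : 1 < n) (t : ℝ) :
    |(cnt 1 n (· ≤ t) : ℝ) - (n:ℝ) * Phi 1 t| ≤ 2 := by
  classical
  have hpi := Real.pi_pos
  have hn0 : (0:ℝ) < n := by positivity
  set m := (n+1)/2 with hm
  have hm2 : 2*m = n+1 := by rcases hn with ⟨r, hr⟩; omega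
  have hmr : (m:ℝ) = ((n:ℝ)+1)/2 := by
    have : ((2*m:ℕ):ℝ) = ((n+1:ℕ):ℝ) := by rw [hm2]
    push_cast at this; linarith
  set α := Real.arccos t / (2*Real.pi) with hα
  have hα0 : 0 ≤ α := div_nonneg (Real.arccos_nonneg t) (by positivity)
  have hα2 : α ≤ 1/2 := by
    rw [hα, div_le_iff₀ (by positivity)]
    calc Real.arccos t ≤ Real.pi := Real.arccos_le_pi t
      _ = 1/2 * (2*Real.pi) := by ring
  set c := ⌈(n:ℝ)*α⌉₊ with hc
  have hcm : c ≤ m := by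
    rw [hc, Nat.ceil_le, hmr]
    nlinarith
  have hiff : ∀ b : ℕ, b < m →
      (Real.cos (2*Real.pi*(b:ℝ)/(n:ℝ)) ≤ t ↔ (n:ℝ)*α ≤ (b:ℝ)) := by
    intro b hb
    obtain ⟨h1, h2⟩ := bn_mem hn1 hb hn
    rw [show 2*Real.pi*(b:ℝ)/(n:ℝ) = 2*Real.pi*((b:ℝ)/(n:ℝ)) by ring,
      cos_le_iff_arccos h1 h2, hα,
      show 2*Real.pi*((b:ℝ)/(n:ℝ)) = ((b:ℝ)*(2*Real.pi))/(n:ℝ) by ring,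
      le_div_iff₀ hn0, ← mul_div_assoc,
      div_le_iff₀ (by positivity : (0:ℝ) < 2*Real.pi)]
    constructor <;> intro h <;> nlinarith [h]
  have hfil : ((Finset.range m).filter
      (fun b : ℕ => Real.cos (2*Real.pi*(b:ℝ)/(n:ℝ)) ≤ t)) = Finset.Ico c m := by
    ext b
    simp only [Finset.mem_filter, Finset.mem_range, Finset.mem_Ico]
    constructor
    · rintro ⟨hb, hcos⟩
      refine ⟨?_, hb⟩
      rw [hc, Nat.ceil_le]
      exact (hiff b hb).mp hcos
    · rintro ⟨hcb, hb⟩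
      refine ⟨hb, ?_⟩
      apply (hiff b hb).mpr
      exact le_trans (Nat.le_ceil _) (by exact_mod_cast hcb)
  have hcount : cnt 1 n (· ≤ t) = m - c := by
    rw [cnt_one_filter, hfil, Nat.card_Ico]
  have hcast : ((m - c : ℕ) : ℝ) = (m:ℝ) - (c:ℝ) := by
    rw [Nat.cast_sub hcm]
  have hceil1 : (n:ℝ)*α ≤ (c:ℝ) := Nat.le_ceil _
  have hceil2 : (c:ℝ) < (n:ℝ)*α + 1 := Nat.ceil_lt_add_one (by positivity)
  rw [hcount, hcast, Phi_one, ← hα]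
  rw [abs_le]
  constructor <;> nlinarith [hmr]

open scoped Classical in
lemma base_lt (n : ℕ) (hn : Odd n) (hn1 : 1 < n) (t : ℝ) :
    |(cnt 1 n (· < t) : ℝ) - (n:ℝ) * Phi 1 t| ≤ 3 := by
  classical
  have hpi := Real.pi_pos
  have hn0 : (0:ℝ) < n := by positivity
  set m := (n+1)/2 with hm
  have hle := base_le n hn hn1 t
  set slt := (Finset.range m).filter (fun b : ℕ => Real.cos (2*Real.pi*(b:ℝ)/(n:ℝ)) < t) with hslt
  set sle := (Finset.range m).filter (fun b : ℕ => Real.cos (2*Real.pi*(b:ℝ)/(n:ℝ)) ≤ t) with hsle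
  set seq := (Finset.range m).filter (fun b : ℕ => Real.cos (2*Real.pi*(b:ℝ)/(n:ℝ)) = t) with hseq
  have h1 : slt ⊆ sle := by
    intro b hb
    simp only [hslt, hsle, Finset.mem_filter] at hb ⊢
    exact ⟨hb.1, le_of_lt hb.2⟩
  have h2 : sle ⊆ slt ∪ seq := by
    intro b hb
    simp only [hslt, hsle, hseq, Finset.mem_filter, Finset.mem_union] at hb ⊢
    rcases lt_or_eq_of_le hb.2 with h | h
    · exact Or.inl ⟨hb.1, h⟩
    · exact Or.inr ⟨hb.1, h⟩
  have heq1 : seq.card ≤ 1 := by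
    rw [Finset.card_le_one]
    intro a ha b hb
    simp only [hseq, Finset.mem_filter, Finset.mem_range] at ha hb
    obtain ⟨ha1, ha2⟩ := ha
    obtain ⟨hb1, hb2⟩ := hb
    obtain ⟨ha3, ha4⟩ := bn_mem hn1 ha1 hn
    obtain ⟨hb3, hb4⟩ := bn_mem hn1 hb1 hn
    have hab : (a:ℝ)/(n:ℝ) = (b:ℝ)/(n:ℝ) := by
      apply cos_injOn ⟨ha3, ha4⟩ ⟨hb3, hb4⟩
      show Real.cos (2*Real.pi*((a:ℝ)/(n:ℝ))) = Real.cos (2*Real.pi*((b:ℝ)/(n:ℝ)))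
      rw [show 2*Real.pi*((a:ℝ)/(n:ℝ)) = 2*Real.pi*(a:ℝ)/(n:ℝ) by ring,
        show 2*Real.pi*((b:ℝ)/(n:ℝ)) = 2*Real.pi*(b:ℝ)/(n:ℝ) by ring, ha2, hb2]
    field_simp at hab
    exact_mod_cast hab
  have hcards : sle.card ≤ slt.card + 1 ∧ slt.card ≤ sle.card := by
    constructor
    · calc sle.card ≤ (slt ∪ seq).card := Finset.card_le_card h2
        _ ≤ slt.card + seq.card := Finset.card_union_le _ _
        _ ≤ slt.card + 1 := by omega
    · exact Finset.card_le_card h1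
  have hclt : cnt 1 n (· < t) = slt.card := by rw [cnt_one_filter]
  have hcle : cnt 1 n (· ≤ t) = sle.card := by rw [cnt_one_filter]
  rw [hclt]
  rw [hcle] at hle
  rw [abs_le] at *
  obtain ⟨hc1, hc2⟩ := hcards
  have e1 : ((sle.card : ℕ) : ℝ) ≤ (slt.card : ℝ) + 1 := by exact_mod_cast hc1
  have e2 : ((slt.card : ℕ) : ℝ) ≤ (sle.card : ℝ) := by exact_mod_cast hc2
  constructor <;> [linarith [hle.1]; linarith [hle.2]]
end


section


lemma step (j n : ℕ) (hn : Odd n) (hn1 : 1 < n) (rel : ℝ → ℝ → Prop)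
    (hshift : ∀ x s u : ℝ, rel (x+s) u ↔ rel s (u-x)) (D : ℝ) (hD : 0 ≤ D)
    (IH : ∀ s, |(cnt j n (fun x => rel x s) : ℝ) - (n:ℝ)^j * Phi j s| ≤ D) (t : ℝ) :
    |(cnt (j+1) n (fun x => rel x t) : ℝ) - (n:ℝ)^(j+1) * Phi (j+1) t|
      ≤ (n:ℝ)*D + (n:ℝ)^j := by
  have hn0 : (0:ℝ) < n := by positivity
  set m := (n+1)/2 with hm
  have hmn : m ≤ n := by omega
  have hsum : cnt (j+1) n (fun x => rel x t)
      = ∑ b ∈ Finset.range m, cnt j n (fun x => rel x (t - Real.cos (2*Real.pi*(b:ℝ)/(n:ℝ)))) := by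
    rw [cnt_succ]
    apply Finset.sum_congr rfl
    intro b _
    exact cnt_congr _ _ _ _ (fun s => hshift _ s t)
  have hcast : ((∑ b ∈ Finset.range m,
        cnt j n (fun x => rel x (t - Real.cos (2*Real.pi*(b:ℝ)/(n:ℝ)))) : ℕ) : ℝ)
      = ∑ b ∈ Finset.range m,
        ((cnt j n (fun x => rel x (t - Real.cos (2*Real.pi*(b:ℝ)/(n:ℝ)))) : ℕ) : ℝ) := by
    push_cast
    rfl
  set S2 := ∑ b ∈ Finset.range m, Phi j (t - Real.cos (2*Real.pi*(b:ℝ)/(n:ℝ))) with hS2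
  have h1 : |(∑ b ∈ Finset.range m,
        ((cnt j n (fun x => rel x (t - Real.cos (2*Real.pi*(b:ℝ)/(n:ℝ)))) : ℕ) : ℝ))
      - (n:ℝ)^j * S2| ≤ (m:ℝ) * D := by
    rw [hS2, Finset.mul_sum, ← Finset.sum_sub_distrib]
    calc |∑ b ∈ Finset.range m,
          (((cnt j n (fun x => rel x (t - Real.cos (2*Real.pi*(b:ℝ)/(n:ℝ)))) : ℕ) : ℝ)
            - (n:ℝ)^j * Phi j (t - Real.cos (2*Real.pi*(b:ℝ)/(n:ℝ))))|
        ≤ ∑ b ∈ Finset.range m,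
          |((cnt j n (fun x => rel x (t - Real.cos (2*Real.pi*(b:ℝ)/(n:ℝ)))) : ℕ) : ℝ)
            - (n:ℝ)^j * Phi j (t - Real.cos (2*Real.pi*(b:ℝ)/(n:ℝ)))| :=
          Finset.abs_sum_le_sum_abs _ _
      _ ≤ ∑ _b ∈ Finset.range m, D := Finset.sum_le_sum (fun b _ => IH _)
      _ = (m:ℝ) * D := by rw [Finset.sum_const, Finset.card_range, nsmul_eq_mul]
  have h2 : |S2 - (n:ℝ) * Phi (j+1) t| ≤ 1 := riemann j n hn hn1 t
  have hmd : (m:ℝ) * D ≤ (n:ℝ) * D := by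
    apply mul_le_mul_of_nonneg_right _ hD
    exact_mod_cast hmn
  have hpow : (0:ℝ) < (n:ℝ)^j := by positivity
  rw [hsum, hcast]
  have e1 : (n:ℝ)^(j+1) * Phi (j+1) t = (n:ℝ)^j * ((n:ℝ) * Phi (j+1) t) := by ring
  rw [e1]
  calc |(∑ b ∈ Finset.range m,
        ((cnt j n (fun x => rel x (t - Real.cos (2*Real.pi*(b:ℝ)/(n:ℝ)))) : ℕ) : ℝ))
      - (n:ℝ)^j * ((n:ℝ) * Phi (j+1) t)|
      ≤ |(∑ b ∈ Finset.range m,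
          ((cnt j n (fun x => rel x (t - Real.cos (2*Real.pi*(b:ℝ)/(n:ℝ)))) : ℕ) : ℝ))
        - (n:ℝ)^j * S2| + |(n:ℝ)^j * S2 - (n:ℝ)^j * ((n:ℝ) * Phi (j+1) t)| := by
        apply abs_sub_le
    _ ≤ (m:ℝ)*D + (n:ℝ)^j * 1 := by
        apply add_le_add h1
        rw [← mul_sub, abs_mul, abs_of_pos hpow]
        exact mul_le_mul_of_nonneg_left h2 hpow.le
    _ ≤ (n:ℝ)*D + (n:ℝ)^j := by
        rw [mul_one]
        exact add_le_add hmd le_rfl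

lemma key (j : ℕ) (hj : 1 ≤ j) (n : ℕ) (hn : Odd n) (hn1 : 1 < n) (t : ℝ) :
    |(cnt j n (· ≤ t) : ℝ) - (n:ℝ)^j * Phi j t| ≤ ((j:ℝ)+2) * (n:ℝ)^(j-1)
    ∧ |(cnt j n (· < t) : ℝ) - (n:ℝ)^j * Phi j t| ≤ ((j:ℝ)+2) * (n:ℝ)^(j-1) := by
  induction j, hj using Nat.le_induction generalizing t with
  | base =>
    have hn0 : (0:ℝ) < n := by positivity
    simp only [pow_one, Nat.cast_one]
    norm_num
    constructor
    · calc |(cnt 1 n (· ≤ t) : ℝ) - (n:ℝ) * Phi 1 t| ≤ 2 := base_le n hn hn1 t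
        _ ≤ 3 := by norm_num
    · exact base_lt n hn hn1 t
  | succ j hj IH =>
    have hn0 : (0:ℝ) < n := by positivity
    have hD : (0:ℝ) ≤ ((j:ℝ)+2) * (n:ℝ)^(j-1) := by positivity
    have hpow : (n:ℝ)^(j-1) * (n:ℝ) = (n:ℝ)^j := by
      rw [← pow_succ]
      congr 1
      omega
    have hbound : (n:ℝ) * (((j:ℝ)+2) * (n:ℝ)^(j-1)) + (n:ℝ)^j
        = ((j:ℝ)+3) * (n:ℝ)^j := by
      rw [show (n:ℝ) * (((j:ℝ)+2) * (n:ℝ)^(j-1)) = ((j:ℝ)+2) * ((n:ℝ)^(j-1) * (n:ℝ)) by ring,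
        hpow]
      ring
    have htarget : (((j:ℕ)+1:ℕ):ℝ)+2 = (j:ℝ)+3 := by push_cast; ring
    have hidx : (j+1) - 1 = j := by omega
    constructor
    · have := step j n hn hn1 (fun x u => x ≤ u) (fun x s u => by constructor <;> intro h <;> linarith)
        (((j:ℝ)+2) * (n:ℝ)^(j-1)) hD (fun s => (IH s).1) t
      rw [hidx, htarget, ← hbound]
      exact this
    · have := step j n hn hn1 (fun x u => x < u) (fun x s u => by constructor <;> intro h <;> linarith)
        (((j:ℝ)+2) * (n:ℝ)^(j-1)) hD (fun s => (IH s).2) t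
      rw [hidx, htarget, ← hbound]
      exact this
end


end LPC

/-- Lattice point count: for `I = [c,d] ⊆ [-k,k]`, the number of points
`(a₁/n,…,a_k/n)` with integers `0 ≤ aᵢ < n/2` and `∑ᵢ cos(2πaᵢ/n) ∈ [c,d]`
equals `n^k·Vol(B_k(I)) + O_k(n^{k-1})`, the implied constant depending only on
`k` and the interval. -/
theorem lattice_point_count (k : ℕ) (hk : 1 ≤ k) (c d : ℝ)
    (hc : -(k : ℝ) ≤ c) (hcd : c ≤ d) (hd : d ≤ (k : ℝ)) :
    ∃ C : ℝ, 0 < C ∧ ∀ n : ℕ, Odd n → 1 < n →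
      |(Nat.card {a : Fin k → ℕ // (∀ i, 2 * a i < n) ∧
          (∑ i, Real.cos (2 * Real.pi * (a i : ℝ) / (n : ℝ))) ∈ Set.Icc c d} : ℝ) -
        (n : ℝ) ^ k * (MeasureTheory.volume (boxRegion k c d)).toReal| ≤
      C * (n : ℝ) ^ (k - 1) := by
  classical
  refine ⟨2*(k:ℝ)+4, by positivity, ?_⟩
  intro n hodd hn1
  have hn0 : (0:ℝ) < n := by positivity
  -- volume of the box region
  obtain ⟨k', rfl⟩ : ∃ k', k = k'+1 := ⟨k-1, by omega⟩
  set k := k'+1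
  have hsub1 : ALt k c ⊆ ALe k d := fun x hx => ⟨hx.1, le_trans (le_of_lt hx.2) hcd⟩
  have hsub2 : ALt k c ⊆ ALe k c := fun x hx => ⟨hx.1, le_of_lt hx.2⟩
  have hboxr : boxRegion k c d = ALe k d \ ALt k c := by
    ext x
    simp only [boxRegion, ALe, ALt, Set.mem_setOf_eq, Set.mem_diff, Set.mem_Icc]
    constructor
    · rintro ⟨hb, h1, h2⟩
      exact ⟨⟨hb, h2⟩, fun hlt => absurd hlt.2 (not_lt.mpr h1)⟩
    · rintro ⟨⟨hb, h2⟩, hnlt⟩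
      refine ⟨hb, ?_, h2⟩
      by_contra hcc
      exact hnlt ⟨hb, lt_of_not_ge hcc⟩
  have hvne : volume (ALt k c) ≠ ⊤ :=
    ne_top_of_le_ne_top (vol_ALe_ne_top k c) (measure_mono hsub2)
  have hvolbox : volume (boxRegion k c d) = volume (ALe k d) - volume (ALt k c) := by
    rw [hboxr]
    exact measure_diff hsub1 (meas_ALt k c).nullMeasurableSet hvne
  have hvolLt : volume (ALt k c) = volume (ALe k c) := by
    apply le_antisymm (measure_mono hsub2)
    have hcover : ALe k c ⊆ ALt k c ∪ AEq k c := by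
      intro x hx
      rcases lt_or_eq_of_le hx.2 with h | h
      · exact Or.inl ⟨hx.1, h⟩
      · exact Or.inr ⟨hx.1, h⟩
    calc volume (ALe k c) ≤ volume (ALt k c ∪ AEq k c) := measure_mono hcover
      _ ≤ volume (ALt k c) + volume (AEq k c) := measure_union_le _ _
      _ = volume (ALt k c) := by rw [vol_AEq k' c, add_zero]
  have hPhiBox : (volume (boxRegion k c d)).toReal = Phi k d - Phi k c := by
    rw [hvolbox, ENNReal.toReal_sub_of_le (measure_mono hsub1) (vol_ALe_ne_top k d),
      hvolLt]
    rfl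
  -- counting
  set P : (Fin k → ℕ) → Prop :=
    fun a => (∀ i, 2 * a i < n) ∧
      (∑ i, Real.cos (2 * Real.pi * (a i : ℝ) / (n : ℝ))) ∈ Set.Icc c d with hP
  have hNcard : Nat.card {a : Fin k → ℕ // P a}
      = ((Fintype.piFinset fun _ : Fin k => Finset.range n).filter P).card := by
    rw [← Nat.card_eq_finsetCard]
    apply Nat.card_congr
    apply Equiv.subtypeEquivRight
    intro a
    simp only [Finset.mem_filter, Fintype.mem_piFinset, Finset.mem_range]
    constructor
    · intro h
      exact ⟨fun i => by have := h.1 i; omega, h⟩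
    · intro h
      exact h.2
  have hfilter : ((Fintype.piFinset fun _ : Fin k => Finset.range n).filter P)
      = ((Fintype.piFinset fun _ : Fin k => Finset.range n).filter
          (fun a => (∀ i, 2 * a i < n)
            ∧ (∑ i, Real.cos (2*Real.pi*(a i : ℝ)/(n:ℝ))) ≤ d))
        \ ((Fintype.piFinset fun _ : Fin k => Finset.range n).filter
          (fun a => (∀ i, 2 * a i < n)
            ∧ (∑ i, Real.cos (2*Real.pi*(a i : ℝ)/(n:ℝ))) < c)) := by
    ext a
    simp only [hP, Finset.mem_sdiff, Finset.mem_filter, Set.mem_Icc]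
    constructor
    · rintro ⟨hm, hlt, h1, h2⟩
      exact ⟨⟨hm, hlt, h2⟩, fun hcon => absurd hcon.2.2 (not_lt.mpr h1)⟩
    · rintro ⟨⟨hm, hlt, h2⟩, hnot⟩
      refine ⟨hm, hlt, ?_, h2⟩
      by_contra hcc
      exact hnot ⟨hm, hlt, lt_of_not_ge hcc⟩
  have hsubf : ((Fintype.piFinset fun _ : Fin k => Finset.range n).filter
          (fun a => (∀ i, 2 * a i < n)
            ∧ (∑ i, Real.cos (2*Real.pi*(a i : ℝ)/(n:ℝ))) < c))
      ⊆ ((Fintype.piFinset fun _ : Fin k => Finset.range n).filter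
          (fun a => (∀ i, 2 * a i < n)
            ∧ (∑ i, Real.cos (2*Real.pi*(a i : ℝ)/(n:ℝ))) ≤ d)) := by
    intro a ha
    simp only [Finset.mem_filter] at ha ⊢
    exact ⟨ha.1, ha.2.1, le_trans (le_of_lt ha.2.2) hcd⟩
  have hcnt_eq : Nat.card {a : Fin k → ℕ // P a} = cnt k n (· ≤ d) - cnt k n (· < c) := by
    rw [hNcard, hfilter, Finset.card_sdiff_of_subset hsubf]
    rfl
  have hcle : cnt k n (· < c) ≤ cnt k n (· ≤ d) := Finset.card_le_card hsubf
  have hkey_d := (key k hk n hodd hn1 d).1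
  have hkey_c := (key k hk n hodd hn1 c).2
  have hcast : ((cnt k n (· ≤ d) - cnt k n (· < c) : ℕ) : ℝ)
      = (cnt k n (· ≤ d) : ℝ) - (cnt k n (· < c) : ℝ) := by
    rw [Nat.cast_sub hcle]
  rw [show {a : Fin k → ℕ // (∀ i, 2 * a i < n) ∧
      (∑ i, Real.cos (2 * Real.pi * (a i : ℝ) / (n : ℝ))) ∈ Set.Icc c d}
    = {a : Fin k → ℕ // P a} by rfl]
  rw [hcnt_eq, hcast, hPhiBox]
  have hfin : |(cnt k n (· ≤ d) : ℝ) - (cnt k n (· < c) : ℝ)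
      - (n:ℝ)^k * (Phi k d - Phi k c)|
      ≤ ((k:ℝ)+2) * (n:ℝ)^(k-1) + ((k:ℝ)+2) * (n:ℝ)^(k-1) := by
    have e : (cnt k n (· ≤ d) : ℝ) - (cnt k n (· < c) : ℝ) - (n:ℝ)^k * (Phi k d - Phi k c)
        = ((cnt k n (· ≤ d) : ℝ) - (n:ℝ)^k * Phi k d)
          - ((cnt k n (· < c) : ℝ) - (n:ℝ)^k * Phi k c) := by ring
    rw [e]
    calc |((cnt k n (· ≤ d) : ℝ) - (n:ℝ)^k * Phi k d)
          - ((cnt k n (· < c) : ℝ) - (n:ℝ)^k * Phi k c)|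
        ≤ |(cnt k n (· ≤ d) : ℝ) - (n:ℝ)^k * Phi k d|
          + |(cnt k n (· < c) : ℝ) - (n:ℝ)^k * Phi k c| := abs_sub _ _
      _ ≤ ((k:ℝ)+2) * (n:ℝ)^(k-1) + ((k:ℝ)+2) * (n:ℝ)^(k-1) :=
          add_le_add hkey_d hkey_c
  calc |(cnt k n (· ≤ d) : ℝ) - (cnt k n (· < c) : ℝ) - (n:ℝ)^k * (Phi k d - Phi k c)|
      ≤ ((k:ℝ)+2) * (n:ℝ)^(k-1) + ((k:ℝ)+2) * (n:ℝ)^(k-1) := hfin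
    _ = (2*(k:ℝ)+4) * (n:ℝ)^(k-1) := by ring

#print axioms lattice_point_count
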